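/- Let S' be a string not ending with character α, y ≥ 1, and let 𝒫 be a set of patterns each with at least two runs. Let P_i' be the longest string among the truncated strings of patterns in 𝒫 that is a suffix of S' (assuming one exists, and that every pattern in 𝒫 whose truncated string is a suffix of S' has truncated string a suffix of P_i'). Then a pattern P ∈ 𝒫 truncate matches S'·α^y if and only if P truncate matches P_i'·α^y. -/
import Mathlib


variable {α : Type*}

/-- The run-length encoding of a string: each maximal run `a^n` becomes the pair `(a, n)`. -/
def rle [DecidableEq α] : List α → List (α × ℕ)
  | [] => []
  | a :: l =>
    match rle l with
    | [] => [(a, 1)]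
    | (b, n) :: t => if a = b then (b, n + 1) :: t else (a, 1) :: (b, n) :: t

/-- `TruncDecomp P Pp a w` : `P = Pp ++ a^w` where `a^w` is the last run of `P`
(`w ≥ 1` and `Pp` does not end with `a`). `Pp` is the truncated string of `P`. -/
def TruncDecomp (P Pp : List α) (a : α) (w : ℕ) : Prop :=
  P = Pp ++ List.replicate w a ∧ 1 ≤ w ∧ Pp.getLast? ≠ some a

/-- `P` truncate matches `Q`: with `P = Pp ++ a^w` and `Q = Qp ++ a^v` (last runs),
`Pp` is a suffix of `Qp`, the run characters agree, and `w ≤ v`. -/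
def TruncMatch (P Q : List α) : Prop :=
  ∃ Pp a w Qp v, TruncDecomp P Pp a w ∧ TruncDecomp Q Qp a v ∧ Pp <:+ Qp ∧ w ≤ v

private lemma rep_cancel {b : α} : ∀ {w1 w2 : ℕ} {r1 r2 : List α}, w1 ≤ w2 →
    List.replicate w1 b ++ r1 = List.replicate w2 b ++ r2 →
    r1 = List.replicate (w2 - w1) b ++ r2 := by
  intro w1
  induction w1 with
  | zero => intro w2 r1 r2 _ h; simpa using h
  | succ n ih =>
    intro w2 r1 r2 hle h
    obtain ⟨m, rfl⟩ : ∃ m, w2 = m + 1 := ⟨w2 - 1, by omega⟩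
    simp only [List.replicate_succ, List.cons_append, List.cons.injEq] at h
    have := ih (by omega) h.2
    simpa [Nat.succ_sub_succ] using this

private lemma truncDecomp_unique {Q Qp1 Qp2 : List α} {b1 b2 : α} {w1 w2 : ℕ}
    (h1 : TruncDecomp Q Qp1 b1 w1) (h2 : TruncDecomp Q Qp2 b2 w2) :
    Qp1 = Qp2 ∧ b1 = b2 ∧ w1 = w2 := by
  obtain ⟨e1, hw1, hl1⟩ := h1
  obtain ⟨e2, hw2, hl2⟩ := h2
  have e : List.replicate w1 b1 ++ Qp1.reverse = List.replicate w2 b2 ++ Qp2.reverse := by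
    have := congrArg List.reverse (e1.symm.trans e2)
    simpa [List.reverse_append] using this
  have hb : b1 = b2 := by
    obtain ⟨m1, rfl⟩ : ∃ m, w1 = m + 1 := ⟨w1 - 1, by omega⟩
    obtain ⟨m2, rfl⟩ : ∃ m, w2 = m + 1 := ⟨w2 - 1, by omega⟩
    simpa [List.replicate_succ] using congrArg List.head? e
  subst hb
  have key : ∀ {v1 v2 : ℕ} {p1 p2 : List α}, v1 ≤ v2 →
      List.replicate v1 b1 ++ p1.reverse = List.replicate v2 b1 ++ p2.reverse →
      p1.getLast? ≠ some b1 → v1 = v2 ∧ p1 = p2 := by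
    intro v1 v2 p1 p2 hle he hlast
    have h3 := rep_cancel hle he
    rcases Nat.eq_or_lt_of_le hle with h | h
    · subst h
      simp at h3
      exact ⟨rfl, by simpa using congrArg List.reverse h3⟩
    · exfalso
      apply hlast
      rw [List.getLast?_eq_head?_reverse, h3]
      obtain ⟨m, hm⟩ : ∃ m, v2 - v1 = m + 1 := ⟨v2 - v1 - 1, by omega⟩
      simp [hm, List.replicate_succ]
  rcases le_total w1 w2 with h | h
  · obtain ⟨hw, hp⟩ := key h e hl1
    exact ⟨hp, rfl, hw⟩
  · obtain ⟨hw, hp⟩ := key h e.symm hl2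
    exact ⟨hp.symm, rfl, hw.symm⟩

private lemma suffix_getLast?_ne {l s : List α} {a : α} (h : l <:+ s)
    (hs : s.getLast? ≠ some a) : l.getLast? ≠ some a := by
  obtain ⟨t, rfl⟩ := h
  rcases l with _ | ⟨x, l⟩
  · simp
  · intro hc
    apply hs
    rw [List.getLast?_append]
    simp [hc]

private lemma truncDecomp_append {s : List α} {a : α} {y : ℕ} (hy : 1 ≤ y)
    (hs : s.getLast? ≠ some a) : TruncDecomp (s ++ List.replicate y a) s a y :=
  ⟨rfl, hy, hs⟩

/-- Let Pi' be the longest suffix of S' among the truncated strings of the patterns in Pats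
(each pattern having at least two runs).  Then a pattern P ∈ Pats truncate matches
S' · α^y iff P truncate matches Pi' · α^y. -/
theorem truncMatch_via_longest_truncated_suffix [DecidableEq α]
    (Pats : Set (List α)) (hruns : ∀ P ∈ Pats, 2 ≤ (rle P).length)
    (S' : List α) (a : α) (y : ℕ) (hy : 1 ≤ y) (hS' : S'.getLast? ≠ some a)
    (Pi' : List α)
    (hPi' : ∃ Pi ∈ Pats, ∃ b w, TruncDecomp Pi Pi' b w)
    (hPi'suf : Pi' <:+ S')
    (hmax : ∀ P ∈ Pats, ∀ Q b w, TruncDecomp P Q b w → Q <:+ S' → Q <:+ Pi') :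
    ∀ P ∈ Pats, (TruncMatch P (S' ++ List.replicate y a) ↔
      TruncMatch P (Pi' ++ List.replicate y a)) := by
  have hPi'last : Pi'.getLast? ≠ some a := suffix_getLast?_ne hPi'suf hS'
  have hdS : TruncDecomp (S' ++ List.replicate y a) S' a y := truncDecomp_append hy hS'
  have hdPi : TruncDecomp (Pi' ++ List.replicate y a) Pi' a y := truncDecomp_append hy hPi'last
  intro P hP
  constructor
  · rintro ⟨Pp, b, w, Qp, v, hd1, hd2, hsuf, hwv⟩
    obtain ⟨hQp, hb, hv⟩ := truncDecomp_unique hd2 hdS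
    subst hQp; subst hb
    have hPpPi : Pp <:+ Pi' := hmax P hP Pp b w hd1 hsuf
    exact ⟨Pp, b, w, Pi', y, hd1, hdPi, hPpPi, hv ▸ hwv⟩
  · rintro ⟨Pp, b, w, Qp, v, hd1, hd2, hsuf, hwv⟩
    obtain ⟨hQp, hb, hv⟩ := truncDecomp_unique hd2 hdPi
    subst hQp; subst hb
    exact ⟨Pp, b, w, S', y, hd1, hdS, hsuf.trans hPi'suf, hv ▸ hwv⟩
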